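/- If at each step the agent with the largest opinion (lowest index among ties) updates, then the neighbor set N_{M(x(t))} and z(t) = min_{i ∈ N_{M(x(t))}} x_i(t) are constant; opinions of agents in N_{M(x(0))} are non-increasing and bounded below by z(0); opinions of other agents are constant; and max_i x_i(k−1) − z(k−1) ≤ (1 − 1/k)·(max_i x_i(0) − z(0)). -/

import Mathlib

open scoped Classical
open Finset

noncomputable def nearList {n : ℕ} (x : Fin n → ℝ) (i : Fin n) : List (Fin n) :=
  @List.insertionSort (Fin n)
    (fun j j' => |x j - x i| < |x j' - x i| ∨ (|x j - x i| = |x j' - x i| ∧ j ≤ j'))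
    (Classical.decRel _) (List.finRange n)

/-- The set of the `k` agents nearest to `i` in opinion distance (ties broken by lower index). -/
noncomputable def nbr {n : ℕ} (k : ℕ) (x : Fin n → ℝ) (i : Fin n) : Finset (Fin n) :=
  ((nearList x i).take k).toFinset

/-- The asynchronous update `f(x,i)`. -/
noncomputable def upd {n : ℕ} (k : ℕ) (x : Fin n → ℝ) (i : Fin n) : Fin n → ℝ :=
  Function.update x i ((∑ j ∈ nbr k x i, x j) / k)

/-- A configuration is clustered if all neighbors of every agent share its opinion. -/
def Clustered {n : ℕ} (k : ℕ) (x : Fin n → ℝ) : Prop :=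
  ∀ i : Fin n, ∀ j ∈ nbr k x i, x j = x i

/-- `μ(x)`: lowest index attaining the minimum. -/
noncomputable def argminIdx {n : ℕ} [NeZero n] (x : Fin n → ℝ) : Fin n :=
  (Finset.univ.filter fun i => ∀ j, x i ≤ x j).min' (by
    obtain ⟨i, -, hi⟩ := Finset.exists_min_image Finset.univ x Finset.univ_nonempty
    exact ⟨i, Finset.mem_filter.mpr ⟨Finset.mem_univ _, fun j => hi j (Finset.mem_univ j)⟩⟩)

/-- `M(x)`: lowest index attaining the maximum. -/
noncomputable def argmaxIdx {n : ℕ} [NeZero n] (x : Fin n → ℝ) : Fin n :=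
  argminIdx (fun i => -x i)

/-- Trajectory of the dynamics with (possibly state-dependent) update selector `σ`. -/
noncomputable def traj {n : ℕ} (k : ℕ) (σ : ℕ → (Fin n → ℝ) → Fin n) (x0 : Fin n → ℝ) :
    ℕ → Fin n → ℝ
  | 0 => x0
  | t + 1 => upd k (traj k σ x0 t) (σ t (traj k σ x0 t))


section aux
variable {n k : ℕ}

private def rel (x : Fin n → ℝ) (i : Fin n) : Fin n → Fin n → Prop :=
  fun j j' => |x j - x i| < |x j' - x i| ∨ (|x j - x i| = |x j' - x i| ∧ j ≤ j')

lemma rel_total (x : Fin n → ℝ) (i : Fin n) : IsTotal (Fin n) (rel x i) := by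
  constructor
  intro a b
  rcases lt_trichotomy (|x a - x i|) (|x b - x i|) with h | h | h
  · exact Or.inl (Or.inl h)
  · rcases le_total a b with h' | h'
    · exact Or.inl (Or.inr ⟨h, h'⟩)
    · exact Or.inr (Or.inr ⟨h.symm, h'⟩)
  · exact Or.inr (Or.inl h)

lemma rel_trans (x : Fin n → ℝ) (i : Fin n) : IsTrans (Fin n) (rel x i) := by
  constructor
  rintro a b c (h1 | ⟨h1, h1'⟩) (h2 | ⟨h2, h2'⟩)
  · exact Or.inl (h1.trans h2)
  · exact Or.inl (h2 ▸ h1)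
  · exact Or.inl (h1 ▸ h2)
  · exact Or.inr ⟨h1.trans h2, h1'.trans h2'⟩

lemma nearList_perm (x : Fin n → ℝ) (i : Fin n) :
    (nearList x i).Perm (List.finRange n) :=
  @List.perm_insertionSort (Fin n) _ (Classical.decRel _) (List.finRange n)

lemma nearList_sorted (x : Fin n → ℝ) (i : Fin n) :
    (nearList x i).Pairwise (rel x i) := by
  haveI := rel_total x i
  haveI := rel_trans x i
  exact @List.pairwise_insertionSort (Fin n) (rel x i) (Classical.decRel _) _ _ (List.finRange n)

lemma nearList_nodup (x : Fin n → ℝ) (i : Fin n) : (nearList x i).Nodup :=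
  ((nearList_perm x i).nodup_iff).2 (List.nodup_finRange n)

lemma nearList_length (x : Fin n → ℝ) (i : Fin n) : (nearList x i).length = n := by
  rw [(nearList_perm x i).length_eq, List.length_finRange]

lemma mem_nearList (x : Fin n → ℝ) (i j : Fin n) : j ∈ nearList x i :=
  ((nearList_perm x i).mem_iff).2 (List.mem_finRange j)

lemma nbr_card (hkn : k ≤ n) (x : Fin n → ℝ) (i : Fin n) : (nbr k x i).card = k := by
  rw [nbr, List.toFinset_card_of_nodup ((nearList_nodup x i).take)]
  rw [List.length_take, nearList_length, min_eq_left hkn]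

lemma nbr_topk (x : Fin n → ℝ) (i : Fin n) :
    ∀ a ∈ nbr k x i, ∀ b ∉ nbr k x i,
      |x a - x i| < |x b - x i| ∨ (|x a - x i| = |x b - x i| ∧ a < b) := by
  intro a ha b hb
  set l := nearList x i with hl
  have hmem : a ∈ l.take k := List.mem_toFinset.1 ha
  have hbmem : b ∈ l := mem_nearList x i b
  have hbd : b ∈ l.drop k := by
    rcases (List.mem_append.1 (by rw [List.take_append_drop k l] ; exact hbmem)) with h | h
    · exact absurd (List.mem_toFinset.2 h) hb
    · exact h
  have hsorted : (l.take k ++ l.drop k).Pairwise (rel x i) := by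
    rw [List.take_append_drop]; exact nearList_sorted x i
  have hrel : rel x i a b := (List.pairwise_append.1 hsorted).2.2 a hmem b hbd
  have hne : a ≠ b := fun h => hb (h ▸ ha)
  rcases hrel with h | ⟨h, h'⟩
  · exact Or.inl h
  · exact Or.inr ⟨h, lt_of_le_of_ne h' hne⟩

lemma nbr_eq_of_topk (hkn : k ≤ n) (x : Fin n → ℝ) (i : Fin n) (T : Finset (Fin n))
    (hT : T.card = k)
    (h : ∀ a ∈ T, ∀ b ∉ T,
      |x a - x i| < |x b - x i| ∨ (|x a - x i| = |x b - x i| ∧ a < b)) :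
    nbr k x i = T := by
  have hcard : (nbr k x i).card = k := nbr_card hkn x i
  have hsub : T ⊆ nbr k x i := by
    intro a haT
    by_contra hanb
    have : ¬ (nbr k x i ⊆ T) := by
      intro hs
      have := Finset.eq_of_subset_of_card_le hs (by rw [hcard, hT])
      exact hanb (this ▸ haT)
    obtain ⟨b, hbnb, hbT⟩ := Finset.not_subset.1 this
    rcases h a haT b hbT with h1 | ⟨h1, h1'⟩ <;>
      rcases nbr_topk x i b hbnb a hanb with h2 | ⟨h2, h2'⟩
    · exact absurd (h1.trans h2) (lt_irrefl _)
    · exact absurd h1 (h2 ▸ lt_irrefl _)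
    · exact absurd h2 (h1 ▸ lt_irrefl _)
    · exact absurd (h1'.trans h2') (lt_irrefl _)
  exact (Finset.eq_of_subset_of_card_le hsub (by rw [hcard, hT])).symm

end aux

section argmax
variable {n k : ℕ} [NeZero n]

lemma argminIdx_le (x : Fin n → ℝ) (j : Fin n) : x (argminIdx x) ≤ x j := by
  have h : argminIdx x ∈ Finset.univ.filter fun i => ∀ j, x i ≤ x j :=
    Finset.min'_mem _ _
  exact (Finset.mem_filter.1 h).2 j

lemma argminIdx_min (x : Fin n → ℝ) (j : Fin n) (hj : ∀ i, x j ≤ x i) :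
    argminIdx x ≤ j :=
  Finset.min'_le _ j (Finset.mem_filter.mpr ⟨Finset.mem_univ _, hj⟩)

lemma le_argmaxIdx (x : Fin n → ℝ) (j : Fin n) : x j ≤ x (argmaxIdx x) := by
  have := argminIdx_le (fun i => -x i) j
  simpa [argmaxIdx] using this

lemma argmaxIdx_min (x : Fin n → ℝ) (j : Fin n) (hj : x (argmaxIdx x) = x j) :
    argmaxIdx x ≤ j := by
  apply argminIdx_min (fun i => -x i) j
  intro i
  simp only [neg_le_neg_iff]
  rw [← hj]
  exact le_argmaxIdx x i

lemma abs_sub_argmax (x : Fin n → ℝ) (j : Fin n) :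
    |x j - x (argmaxIdx x)| = x (argmaxIdx x) - x j := by
  rw [abs_sub_comm]
  exact abs_of_nonneg (sub_nonneg.2 (le_argmaxIdx x j))

lemma nbr_max_topk (x : Fin n → ℝ) :
    ∀ a ∈ nbr k x (argmaxIdx x), ∀ b ∉ nbr k x (argmaxIdx x),
      x b < x a ∨ (x a = x b ∧ a < b) := by
  intro a ha b hb
  rcases nbr_topk x (argmaxIdx x) a ha b hb with h | ⟨h, h'⟩ <;>
    rw [abs_sub_argmax, abs_sub_argmax] at h
  · exact Or.inl (by linarith)
  · exact Or.inr ⟨by linarith, h'⟩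

lemma nbr_max_eq_of_topk (hkn : k ≤ n) (x : Fin n → ℝ) (T : Finset (Fin n))
    (hT : T.card = k)
    (h : ∀ a ∈ T, ∀ b ∉ T, x b < x a ∨ (x a = x b ∧ a < b)) :
    nbr k x (argmaxIdx x) = T := by
  apply nbr_eq_of_topk hkn x (argmaxIdx x) T hT
  intro a ha b hb
  rw [abs_sub_argmax, abs_sub_argmax]
  rcases h a ha b hb with h1 | ⟨h1, h1'⟩
  · exact Or.inl (by linarith)
  · exact Or.inr ⟨by linarith, h1'⟩

lemma argmaxIdx_mem_of_topk (hk : 1 ≤ k) (x : Fin n → ℝ) (T : Finset (Fin n))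
    (hT : T.card = k)
    (h : ∀ a ∈ T, ∀ b ∉ T, x b < x a ∨ (x a = x b ∧ a < b)) :
    argmaxIdx x ∈ T := by
  by_contra hm
  obtain ⟨a, ha⟩ := Finset.card_pos.1 (by omega : 0 < T.card)
  rcases h a ha _ hm with h1 | ⟨h1, h1'⟩
  · exact absurd (le_argmaxIdx x a) (not_le.2 h1)
  · exact absurd (argmaxIdx_min x a h1.symm) (not_le.2 h1')

end argmax


/-- when the maximum-opinion agent always updates, the neighbor set and `z(t)`
are constant, opinions inside are non-increasing and bounded below by `z(0)`, other opinions
are constant, and the gap `max - z` contracts by `1 - 1/k` after `k-1` steps. -/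
theorem max_update_invariants {n k : ℕ} [NeZero n] (hk : 1 ≤ k) (hkn : k ≤ n)
    (x0 : Fin n → ℝ) (X : ℕ → Fin n → ℝ)
    (hX : X = traj k (fun _ x => argmaxIdx x) x0)
    (z : ℕ → ℝ)
    (hz : ∀ t, z t = sInf (X t '' (nbr k (X t) (argmaxIdx (X t)) : Set (Fin n)))) :
    (∀ t, nbr k (X t) (argmaxIdx (X t)) = nbr k x0 (argmaxIdx x0)) ∧
    (∀ t, z t = z 0) ∧
    (∀ i ∈ nbr k x0 (argmaxIdx x0), Antitone (fun t => X t i) ∧ ∀ t, z 0 ≤ X t i) ∧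
    (∀ i ∉ nbr k x0 (argmaxIdx x0), ∀ t, X t i = x0 i) ∧
    (sSup (Set.range (X (k - 1))) - z (k - 1) ≤
      (1 - 1 / (k : ℝ)) * (sSup (Set.range x0) - z 0)) := by
  have hkpos : (0:ℝ) < (k:ℝ) := by exact_mod_cast hk
  have hX0 : X 0 = x0 := by rw [hX]; rfl
  have hXsucc : ∀ t, X (t+1) = upd k (X t) (argmaxIdx (X t)) := by
    intro t; rw [hX]; simp only [traj]
  set m0 := argmaxIdx x0 with hm0
  set S := nbr k x0 m0 with hSdef
  have hScard : S.card = k := nbr_card hkn x0 m0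
  have hSne : S.Nonempty := Finset.card_pos.1 (by omega)
  obtain ⟨i0, hi0S, hi0min⟩ := S.exists_min_image x0 hSne
  set z0 := x0 i0 with hz0def
  have htop0 : ∀ a ∈ S, ∀ b ∉ S, x0 b < x0 a ∨ (x0 a = x0 b ∧ a < b) := nbr_max_topk x0
  have hout : ∀ b ∉ S, x0 b ≤ z0 := by
    intro b hb
    rcases htop0 i0 hi0S b hb with h | ⟨h, -⟩
    · exact h.le
    · exact h.symm.le
  have main : ∀ t, (∀ i ∉ S, X t i = x0 i) ∧ (∀ i ∈ S, z0 ≤ X t i) ∧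
      (∀ i ∈ S, X t i = z0 → x0 i = z0) ∧
      (∀ a ∈ S, ∀ b ∉ S, X t b < X t a ∨ (X t a = X t b ∧ a < b)) := by
    intro t
    induction t with
    | zero =>
      rw [hX0]
      exact ⟨fun i _ => rfl, fun i hi => hi0min i hi, fun i _ h => h, htop0⟩
    | succ t ih =>
      obtain ⟨ih1, ih2, ih3, ih4⟩ := ih
      set mt := argmaxIdx (X t) with hmt
      have hmtS : mt ∈ S := argmaxIdx_mem_of_topk hk (X t) S hScard ih4
      have hnbrt : nbr k (X t) mt = S := nbr_max_eq_of_topk hkn (X t) S hScard ih4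
      set avg := (∑ j ∈ S, X t j) / (k:ℝ) with havgdef
      have hXs : X (t+1) = Function.update (X t) mt avg := by
        rw [hXsucc, upd, hnbrt]
      have havg_ge : z0 ≤ avg := by
        have hsum : ∑ _j ∈ S, z0 ≤ ∑ j ∈ S, X t j := Finset.sum_le_sum (fun j hj => ih2 j hj)
        rw [Finset.sum_const, hScard, nsmul_eq_mul] at hsum
        rw [havgdef, le_div_iff₀ hkpos]
        linarith
      have havg_eq : avg = z0 → ∀ j ∈ S, X t j = z0 := by
        intro h j hj
        have hsumv : ∑ j ∈ S, X t j = (k:ℝ) * z0 := by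
          rw [havgdef, div_eq_iff (ne_of_gt hkpos)] at h
          linarith
        have hsum : ∑ j ∈ S, (X t j - z0) = 0 := by
          rw [Finset.sum_sub_distrib, Finset.sum_const, hScard, nsmul_eq_mul, hsumv]
          ring
        have := (Finset.sum_eq_zero_iff_of_nonneg
          (fun j hj => sub_nonneg.2 (ih2 j hj))).1 hsum j hj
        linarith
      have h1 : ∀ i ∉ S, X (t+1) i = x0 i := by
        intro i hi
        have hne : i ≠ mt := fun h => hi (h ▸ hmtS)
        rw [hXs, Function.update_of_ne hne]
        exact ih1 i hi
      have h2 : ∀ i ∈ S, z0 ≤ X (t+1) i := by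
        intro i hi
        rw [hXs]
        by_cases h : i = mt
        · subst h; rw [Function.update_self]; exact havg_ge
        · rw [Function.update_of_ne h]; exact ih2 i hi
      have h3 : ∀ i ∈ S, X (t+1) i = z0 → x0 i = z0 := by
        intro i hi hiz
        rw [hXs] at hiz
        by_cases h : i = mt
        · subst h; rw [Function.update_self] at hiz
          exact ih3 _ hmtS (havg_eq hiz _ hmtS)
        · rw [Function.update_of_ne h] at hiz; exact ih3 i hi hiz
      refine ⟨h1, h2, h3, ?_⟩
      intro a ha b hb
      have hbx : X (t+1) b = x0 b := h1 b hb
      have hble : x0 b ≤ z0 := hout b hb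
      have hage : z0 ≤ X (t+1) a := h2 a ha
      have hba : X (t+1) b ≤ X (t+1) a := by rw [hbx]; linarith
      rcases eq_or_lt_of_le hba with he | hlt
      · have haz : X (t+1) a = z0 := by
          have : x0 b = X (t+1) a := by rw [← hbx, he]
          linarith
        have hx0a : x0 a = z0 := h3 a ha haz
        rcases htop0 a ha b hb with hc | ⟨-, hc'⟩
        · exfalso
          have hbz : x0 b = z0 := by rw [← hbx, he, haz]
          rw [hx0a, hbz] at hc
          exact lt_irrefl _ hc
        · exact Or.inr ⟨he.symm, hc'⟩
      · exact Or.inl hlt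
  -- derived facts
  have hnbr : ∀ t, nbr k (X t) (argmaxIdx (X t)) = S :=
    fun t => nbr_max_eq_of_topk hkn (X t) S hScard (main t).2.2.2
  have hstep : ∀ t i, X (t+1) i ≤ X t i := by
    intro t i
    rw [hXsucc, upd]
    by_cases h : i = argmaxIdx (X t)
    · subst h
      rw [Function.update_self]
      have hsum : ∑ j ∈ nbr k (X t) (argmaxIdx (X t)), X t j
          ≤ (nbr k (X t) (argmaxIdx (X t))).card • X t (argmaxIdx (X t)) :=
        Finset.sum_le_card_nsmul _ _ _ (fun j _ => le_argmaxIdx (X t) j)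
      rw [nbr_card hkn, nsmul_eq_mul] at hsum
      rw [div_le_iff₀ hkpos]
      linarith
    · rw [Function.update_of_ne h]
  have hmonoi : ∀ i, Antitone fun t => X t i :=
    fun i => antitone_nat_of_succ_le (fun t => hstep t i)
  have hle0 : ∀ t i, X t i ≤ x0 i := by
    intro t i
    have := hmonoi i (Nat.zero_le t)
    simpa [hX0] using this
  have hi0t : ∀ t, X t i0 = z0 := fun t => le_antisymm (hle0 t i0) ((main t).2.1 i0 hi0S)
  have hztt : ∀ t, z t = z0 := by
    intro t
    rw [hz t, hnbr t]
    apply le_antisymm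
    · exact csInf_le (Set.Finite.bddBelow ((S.finite_toSet).image _)) ⟨i0, hi0S, hi0t t⟩
    · refine le_csInf ⟨X t i0, ⟨i0, hi0S, rfl⟩⟩ ?_
      rintro b ⟨j, hj, rfl⟩
      exact (main t).2.1 j hj
  refine ⟨hnbr, fun t => by rw [hztt t, hztt 0], ?_, fun i hi t => (main t).1 i hi, ?_⟩
  · intro i hi
    exact ⟨hmonoi i, fun t => by rw [hztt 0]; exact (main t).2.1 i hi⟩
  -- contraction
  have hM0 : sSup (Set.range x0) = x0 m0 := by
    apply IsGreatest.csSup_eq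
    exact ⟨⟨m0, rfl⟩, by rintro _ ⟨j, rfl⟩; exact le_argmaxIdx x0 j⟩
  have hz0le : z0 ≤ x0 m0 := le_argmaxIdx x0 i0
  set c := x0 m0 - (x0 m0 - z0) / (k:ℝ) with hcdef
  have hcz : z0 ≤ c := by
    have : (x0 m0 - z0) / (k:ℝ) ≤ x0 m0 - z0 :=
      div_le_self (by linarith) (by exact_mod_cast hk)
    rw [hcdef]; linarith
  have hleM0 : ∀ t j, X t j ≤ x0 m0 := fun t j => (hle0 t j).trans (le_argmaxIdx x0 j)
  have havgc : ∀ t, (∑ j ∈ S, X t j) / (k:ℝ) ≤ c := by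
    intro t
    have hsplit : X t i0 + ∑ j ∈ S.erase i0, X t j = ∑ j ∈ S, X t j :=
      Finset.add_sum_erase S _ hi0S
    have hbound : ∑ j ∈ S.erase i0, X t j ≤ ((k:ℝ) - 1) * x0 m0 := by
      have := Finset.sum_le_card_nsmul (S.erase i0) (X t) (x0 m0)
        (fun j _ => hleM0 t j)
      rw [Finset.card_erase_of_mem hi0S, hScard, nsmul_eq_mul] at this
      have hcast : ((k - 1 : ℕ) : ℝ) = (k:ℝ) - 1 := by
        rw [Nat.cast_sub hk]; norm_num
      rwa [hcast] at this
    have hck : c * (k:ℝ) = x0 m0 * (k:ℝ) - (x0 m0 - z0) := by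
      rw [hcdef]; field_simp
    rw [div_le_iff₀ hkpos, ← hsplit, hi0t t, hck]
    nlinarith [hbound]
  set A : ℕ → Finset (Fin n) := fun t => Finset.univ.filter (fun i => c < X t i) with hAdef
  have hmemA : ∀ t i, i ∈ A t ↔ c < X t i := by
    intro t i; simp [hAdef]
  have hA0 : A 0 ⊆ S.erase i0 := by
    intro i hi
    have hci : c < x0 i := by rw [← hX0]; exact (hmemA 0 i).1 hi
    have hiS : i ∈ S := by
      by_contra h
      have := hout i h
      linarith
    refine Finset.mem_erase.2 ⟨?_, hiS⟩
    intro h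
    subst h
    linarith
  have hAsub : ∀ t, A (t+1) ⊆ A t := by
    intro t i hi
    exact (hmemA t i).2 (lt_of_lt_of_le ((hmemA (t+1) i).1 hi) (hstep t i))
  have hupdc : ∀ t, X (t+1) (argmaxIdx (X t)) ≤ c := by
    intro t
    rw [hXsucc, upd, hnbr t, Function.update_self]
    exact havgc t
  have hAstep : ∀ t, A (t+1) ⊆ (A t).erase (argmaxIdx (X t)) := by
    intro t i hi
    refine Finset.mem_erase.2 ⟨?_, hAsub t hi⟩
    intro h
    subst h
    exact absurd ((hmemA (t+1) _).1 hi) (not_lt.2 (hupdc t))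
  have hcardA : ∀ t, (A t).card + t ≤ k - 1 ∨ A t = ∅ := by
    intro t
    induction t with
    | zero =>
      left
      have := Finset.card_le_card hA0
      rw [Finset.card_erase_of_mem hi0S, hScard] at this
      omega
    | succ t ih =>
      rcases Finset.eq_empty_or_nonempty (A t) with he | hne
      · right
        exact Finset.subset_empty.1 (he ▸ hAsub t)
      · rcases ih with ih | ih
        · left
          obtain ⟨a, haA⟩ := hne
          have hmtA : argmaxIdx (X t) ∈ A t := by
            refine (hmemA t _).2 (lt_of_lt_of_le ((hmemA t a).1 haA) ?_)
            exact le_argmaxIdx (X t) a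
          have h1 := Finset.card_le_card (hAstep t)
          rw [Finset.card_erase_of_mem hmtA] at h1
          have h2 : 1 ≤ (A t).card := Finset.card_pos.2 ⟨a, haA⟩
          omega
        · exact absurd ih (Finset.nonempty_iff_ne_empty.1 hne)
  have hAfin : A (k-1) = ∅ := by
    rcases hcardA (k-1) with h | h
    · exact Finset.card_eq_zero.1 (by omega)
    · exact h
  have hfinal : ∀ i, X (k-1) i ≤ c := by
    intro i
    by_contra h
    have : i ∈ A (k-1) := (hmemA _ i).2 (not_le.1 h)
    rw [hAfin] at this
    exact absurd this (Finset.notMem_empty i)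
  haveI : Nonempty (Fin n) := Fin.pos_iff_nonempty.1 (Nat.pos_of_ne_zero (NeZero.ne n))
  have hsup : sSup (Set.range (X (k-1))) ≤ c :=
    csSup_le (Set.range_nonempty _) (by rintro _ ⟨j, rfl⟩; exact hfinal j)
  rw [hM0, hztt (k-1), hztt 0]
  have hfact : (1 - 1/(k:ℝ)) * (x0 m0 - z0) = c - z0 := by
    rw [hcdef]; field_simp; ring
  calc sSup (Set.range (X (k-1))) - z0 ≤ c - z0 := by linarith
    _ = (1 - 1/(k:ℝ)) * (x0 m0 - z0) := hfact.symm
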